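/- Cartesian products (with Kuratowski ordered pairs) exist for well-founded extensional apgs: for any two well-founded extensional apgs X and Y (on types in a fixed universe) there exists a well-founded extensional apg Z (on a type in the same universe) such that for every well-founded extensional apg W, W ⋿ Z if and only if there exist well-founded extensional apgs A and B with A ⋿ X, B ⋿ Y, and W a Kuratowski pair of (A, B). -/

import Mathlib

universe u v

/-- A relation is (inductively) well-founded if every inductive subset is the whole type:
`S` is inductive when `x ∈ S` whenever every child of `x` is in `S`. -/
def IsWFRel {X : Type u} (r : X → X → Prop) : Prop :=
  ∀ S : Set X, (∀ x, (∀ y, r y x → y ∈ S) → x ∈ S) → S = Set.univ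

/-- A relation is extensional if nodes with the same children are equal. -/
def IsExtRel {X : Type u} (r : X → X → Prop) : Prop :=
  ∀ x y, (∀ z, r z x ↔ r z y) → x = y

/-- `Below r x` is the full subgraph `X/x` of nodes admitting a (possibly empty) path to `x`. -/
def Below {X : Type u} (r : X → X → Prop) (x : X) : Type u :=
  {z : X // Relation.ReflTransGen r z x}

/-- The induced relation on the subgraph `X/x`. -/
def belowRel {X : Type u} (r : X → X → Prop) (x : X) :
    Below r x → Below r x → Prop :=
  fun a b => r a.1 b.1

/-- The root of the pointed subgraph `X/x`. -/
def belowRoot {X : Type u} (r : X → X → Prop) (x : X) : Below r x :=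
  ⟨x, Relation.ReflTransGen.refl⟩

/-- Isomorphism of pointed graphs: a relation-preserving-and-reflecting bijection
taking the first distinguished point to the second. -/
def PIso {X : Type u} {Y : Type v} (rX : X → X → Prop) (rY : Y → Y → Prop)
    (x : X) (y : Y) : Prop :=
  ∃ f : X ≃ Y, (∀ a b, rX a b ↔ rY (f a) (f b)) ∧ f x = y

/-- A simulation of graphs. -/
def IsSimulation {X : Type u} {Y : Type v} (rX : X → X → Prop)
    (rY : Y → Y → Prop) (f : X → Y) : Prop :=
  (∀ a b, rX a b → rY (f a) (f b)) ∧
  (∀ x y, rY y (f x) → ∃ a, rX a x ∧ f a = y)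

/-- A bisimulation between graphs. -/
def IsBisimulation {X : Type u} {Y : Type v} (rX : X → X → Prop)
    (rY : Y → Y → Prop) (R : X → Y → Prop) : Prop :=
  ∀ x y, R x y →
    (∀ x', rX x' x → ∃ y', rY y' y ∧ R x' y') ∧
    (∀ y', rY y' y → ∃ x', rX x' x ∧ R x' y')

/-- A bi-entire relation. -/
def BiEntire {X : Type u} {Y : Type v} (R : X → Y → Prop) : Prop :=
  (∀ x, ∃ y, R x y) ∧ (∀ y, ∃ x, R x y)

/-- A well-founded extensional accessible pointed graph ("apg") on a type in universe `u`. -/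
structure WEApg : Type (u + 1) where
  carrier : Type u
  rel : carrier → carrier → Prop
  root : carrier
  acc : ∀ x, Relation.ReflTransGen rel x root
  wf : IsWFRel rel
  ext : IsExtRel rel

/-- Isomorphism of (the underlying pointed graphs of) apgs. -/
def WEApg.Iso (X Y : WEApg.{u}) : Prop :=
  PIso X.rel Y.rel X.root Y.root

/-- Membership of the pointed graph `(W, rW, w)` in the pointed graph `(Y, rY, y)`:
`(W, rW, w)` is isomorphic as a pointed graph to `(Y, rY)/z` for some child `z` of `y`. -/
def MemPGAt {W : Type u} {Y : Type v} (rW : W → W → Prop) (w : W)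
    (rY : Y → Y → Prop) (y : Y) : Prop :=
  ∃ z, rY z y ∧ PIso rW (belowRel rY z) w (belowRoot rY z)

/-- `X ⋿ Y` for apgs: `X` is isomorphic as a pointed graph to `Y/y` for some member
(child of the root) `y` of `Y`. -/
def WEApg.Mem (X Y : WEApg.{u}) : Prop :=
  MemPGAt X.rel X.root Y.rel Y.root

/-- `W` is a Kuratowski ordered pair of `(A, B)`. -/
def IsKuratowskiPair (W A B : WEApg.{u}) : Prop :=
  ∃ P Q : WEApg.{u},
    (∀ Z : WEApg.{u}, Z.Mem W ↔ (Z.Iso P ∨ Z.Iso Q)) ∧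
    (∀ Z : WEApg.{u}, Z.Mem P ↔ Z.Iso A) ∧
    (∀ Z : WEApg.{u}, Z.Mem Q ↔ (Z.Iso A ∨ Z.Iso B))

/-! ### Auxiliary development -/

namespace WEApgAux

open Relation

theorem wellFounded_of_isWFRel {X : Type u} {r : X → X → Prop} (h : IsWFRel r) :
    WellFounded r := by
  constructor
  intro a
  have := h {x | Acc r x} (fun x hx => Acc.intro x hx)
  exact Set.eq_univ_iff_forall.mp this a

theorem isWFRel_of_wellFounded {X : Type u} {r : X → X → Prop} (h : WellFounded r) :
    IsWFRel r := fun _S hS =>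
  Set.eq_univ_of_forall fun x => h.induction x fun y ih => hS y ih

variable {X : Type u} {r : X → X → Prop}

/-- The pre-set associated to a node of a well-founded graph. -/
noncomputable def pset (r : X → X → Prop) (wf : WellFounded r) : X → PSet.{u} :=
  wf.fix fun x ih => PSet.mk {y // r y x} fun y => ih y.1 y.2

theorem pset_eq (wf : WellFounded r) (x : X) :
    pset r wf x = PSet.mk {y // r y x} (fun y => pset r wf y.1) := by
  rw [pset, WellFounded.fix_eq]

theorem pset_mem (wf : WellFounded r) {x y : X} (h : r y x) :
    pset r wf y ∈ pset r wf x := by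
  rw [pset_eq wf x]
  exact PSet.Mem.mk _ (⟨y, h⟩ : {y // r y x})

theorem mem_pset (wf : WellFounded r) {x : X} {z : PSet.{u}} :
    z ∈ pset r wf x ↔ ∃ y, r y x ∧ z.Equiv (pset r wf y) := by
  rw [pset_eq wf x]
  constructor
  · rintro ⟨⟨y, hy⟩, h⟩; exact ⟨y, hy, h⟩
  · rintro ⟨y, hy, h⟩; exact ⟨⟨y, hy⟩, h⟩

/-- Any "transitive-closure denotation" is equivalent to `pset`. -/
theorem pset_equiv (wf : WellFounded r) (d : X → PSet.{u})
    (H1 : ∀ x y, r y x → d y ∈ d x)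
    (H2 : ∀ x z, z ∈ d x → ∃ y, r y x ∧ PSet.Equiv z (d y)) :
    ∀ x, PSet.Equiv (pset r wf x) (d x) := by
  intro x
  induction x using wf.induction with
  | _ x ih =>
    apply PSet.Mem.ext
    intro w
    constructor
    · intro hw
      obtain ⟨y, hy, he⟩ := (mem_pset wf).1 hw
      exact (PSet.Mem.congr_left (he.trans (ih y hy))).2 (H1 x y hy)
    · intro hw
      obtain ⟨y, hy, he⟩ := H2 x w hw
      exact (mem_pset wf).2 ⟨y, hy, he.trans (ih y hy).symm⟩

/-- Rigidity: on an extensional well-founded graph, `pset` is injective up to `Equiv`. -/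
theorem pset_inj (wf : WellFounded r) (ext : IsExtRel r) :
    ∀ {a b : X}, PSet.Equiv (pset r wf a) (pset r wf b) → a = b := by
  intro a
  induction a using wf.induction with
  | _ a ih =>
    intro b h
    apply ext
    intro z
    constructor
    · intro hz
      obtain ⟨y, hy, he⟩ := (mem_pset wf).1
        ((PSet.Mem.congr_right h).1 (pset_mem wf hz))
      exact ih z hz he ▸ hy
    · intro hz
      obtain ⟨y, hy, he⟩ := (mem_pset wf).1
        ((PSet.Mem.congr_right h).2 (pset_mem wf hz))
      exact (ih y hy he.symm) ▸ hy

section Iso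

variable {Y : Type u} {rY : Y → Y → Prop}

/-- An isomorphism of graphs induces `Equiv` of the associated pre-sets. -/
theorem pset_equiv_of_piso (wf : WellFounded r) (wfY : WellFounded rY)
    (f : X ≃ Y) (hf : ∀ a b, r a b ↔ rY (f a) (f b)) (x : X) :
    PSet.Equiv (pset r wf x) (pset rY wfY (f x)) := by
  refine pset_equiv wf (fun x => pset rY wfY (f x)) ?_ ?_ x
  · intro a b hb
    exact pset_mem wfY ((hf b a).1 hb)
  · intro a z hz
    obtain ⟨y', hy', he⟩ := (mem_pset wfY).1 hz
    refine ⟨f.symm y', ?_, ?_⟩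
    · rw [hf (f.symm y') a, f.apply_symm_apply]; exact hy'
    · show z.Equiv (pset rY wfY (f (f.symm y')))
      rw [f.apply_symm_apply]; exact he

/-- Mostowski rigidity: equivalent pre-sets of roots of accessible extensional
well-founded graphs yield a pointed isomorphism. -/
theorem piso_of_pset_equiv (wf : WellFounded r) (wfY : WellFounded rY)
    (ext : IsExtRel r) (extY : IsExtRel rY) {x0 : X} {y0 : Y}
    (accX : ∀ x, ReflTransGen r x x0) (accY : ∀ y, ReflTransGen rY y y0)
    (h : PSet.Equiv (pset r wf x0) (pset rY wfY y0)) : PIso r rY x0 y0 := by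
  set R : X → Y → Prop := fun x y => PSet.Equiv (pset r wf x) (pset rY wfY y) with hR
  have Rfunc : ∀ {x y y'}, R x y → R x y' → y = y' := fun h1 h2 =>
    pset_inj wfY extY (h1.symm.trans h2)
  have Rinj : ∀ {x x' y}, R x y → R x' y → x = x' := fun h1 h2 =>
    pset_inj wf ext (h1.trans h2.symm)
  have Rdown : ∀ {x y x'}, R x y → r x' x → ∃ y', rY y' y ∧ R x' y' := by
    intro x y x' hxy hx'
    obtain ⟨y', hy', he⟩ := (mem_pset wfY).1
      ((PSet.Mem.congr_right hxy).1 (pset_mem wf hx'))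
    exact ⟨y', hy', he⟩
  have Rup : ∀ {x y y'}, R x y → rY y' y → ∃ x', r x' x ∧ R x' y' := by
    intro x y y' hxy hy'
    obtain ⟨x', hx', he⟩ := (mem_pset wf).1
      ((PSet.Mem.congr_right hxy).2 (pset_mem wfY hy'))
    exact ⟨x', hx', he.symm⟩
  have total : ∀ x, ∃ y, R x y := by
    intro x
    induction accX x using Relation.ReflTransGen.head_induction_on with
    | refl => exact ⟨y0, h⟩
    | head h1 _h2 ih =>
      obtain ⟨y, hy⟩ := ih
      obtain ⟨y', hy', he⟩ := Rdown hy h1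
      exact ⟨y', he⟩
  have cototal : ∀ y, ∃ x, R x y := by
    intro y
    induction accY y using Relation.ReflTransGen.head_induction_on with
    | refl => exact ⟨x0, h⟩
    | head h1 _h2 ih =>
      obtain ⟨x, hx⟩ := ih
      obtain ⟨x', hx', he⟩ := Rup hx h1
      exact ⟨x', he⟩
  classical
  choose f hf using total
  choose g hg using cototal
  have hrel : ∀ a b, r a b ↔ rY (f a) (f b) := by
    intro a b
    constructor
    · intro hab
      obtain ⟨y', hy', he⟩ := Rdown (hf b) hab
      rwa [Rfunc he (hf a)] at hy'
    · intro hab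
      obtain ⟨x', hx', he⟩ := Rup (hf b) hab
      rwa [Rinj he (hf a)] at hx'
  exact ⟨⟨f, g, fun x => Rinj (hg (f x)) (hf x), fun y => Rfunc (hf (g y)) (hg y)⟩,
    hrel, Rfunc (hf x0) h⟩

end Iso

end WEApgAux

open WEApgAux Relation

/-- The well-founded relation of an apg. -/
theorem WEApg.wfr (Z : WEApg.{u}) : WellFounded Z.rel :=
  wellFounded_of_isWFRel Z.wf

/-- The pre-set of an apg. -/
noncomputable def WEApg.toPSet (Z : WEApg.{u}) : PSet.{u} :=
  pset Z.rel Z.wfr Z.root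

/-- The ZF-set of an apg. -/
noncomputable def WEApg.toZF (Z : WEApg.{u}) : ZFSet.{u} :=
  ZFSet.mk Z.toPSet

theorem WEApg.iso_iff_zf (W Z : WEApg.{u}) : W.Iso Z ↔ W.toZF = Z.toZF := by
  constructor
  · rintro ⟨f, hf, hroot⟩
    have h1 := pset_equiv_of_piso W.wfr Z.wfr f hf W.root
    rw [hroot] at h1
    exact ZFSet.sound h1
  · intro h
    exact piso_of_pset_equiv W.wfr Z.wfr W.ext Z.ext W.acc Z.acc (ZFSet.exact h)

/-- The subgraph apg `Z/z`. -/
def WEApg.below (Z : WEApg.{u}) (z : Z.carrier) : WEApg.{u} where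
  carrier := Below Z.rel z
  rel := belowRel Z.rel z
  root := belowRoot Z.rel z
  acc := by
    rintro ⟨w, hw⟩
    induction hw using Relation.ReflTransGen.head_induction_on with
    | refl => exact .refl
    | head h1 _h2 ih =>
      refine Relation.ReflTransGen.head ?_ ih
      exact h1
  wf := isWFRel_of_wellFounded
    (Subrelation.wf (fun h => h) (InvImage.wf Subtype.val Z.wfr))
  ext := by
    rintro ⟨a, ha⟩ ⟨b, hb⟩ h
    refine Subtype.ext (Z.ext a b fun w => ?_)
    constructor
    · intro hw
      exact (h ⟨w, Relation.ReflTransGen.head hw ha⟩).1 hw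
    · intro hw
      exact (h ⟨w, Relation.ReflTransGen.head hw hb⟩).2 hw

theorem WEApg.below_pset_equiv (Z : WEApg.{u}) (z : Z.carrier) :
    PSet.Equiv (Z.below z).toPSet (pset Z.rel Z.wfr z) := by
  refine pset_equiv (Z.below z).wfr (fun a => pset Z.rel Z.wfr a.1) ?_ ?_
    (Z.below z).root
  · intro a b hb
    exact pset_mem Z.wfr hb
  · intro b w hw
    obtain ⟨y, hy, he⟩ := (mem_pset Z.wfr).1 hw
    exact ⟨⟨y, Relation.ReflTransGen.head hy b.2⟩, hy, he⟩

theorem WEApg.mem_iff_zf (W Z : WEApg.{u}) : W.Mem Z ↔ W.toZF ∈ Z.toZF := by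
  constructor
  · rintro ⟨z, hz, hiso⟩
    have h1 : W.Iso (Z.below z) := hiso
    have h2 : W.toZF = ZFSet.mk (pset Z.rel Z.wfr z) :=
      ((W.iso_iff_zf (Z.below z)).1 h1).trans (ZFSet.sound (Z.below_pset_equiv z))
    rw [h2]
    exact ZFSet.mk_mem_iff.2 (pset_mem Z.wfr hz)
  · intro h
    obtain ⟨z, hz, he⟩ := (mem_pset Z.wfr).1 (ZFSet.mk_mem_iff.1 h)
    refine ⟨z, hz, ?_⟩
    show W.Iso (Z.below z)
    rw [W.iso_iff_zf (Z.below z)]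
    exact (ZFSet.sound he).trans (ZFSet.sound (Z.below_pset_equiv z)).symm

theorem WEApg.iso_refl (W : WEApg.{u}) : W.Iso W :=
  ⟨Equiv.refl _, fun _ _ => Iff.rfl, rfl⟩

namespace WEApgAux

/-- Positions (finite paths from the root) in a pre-set. -/
def Pos : PSet.{u} → Type u
  | ⟨α, A⟩ => Option (Σ a : α, Pos (A a))

/-- The root position. -/
def posRoot : ∀ x : PSet.{u}, Pos x
  | ⟨_, _⟩ => none

/-- The pre-set denoted by a position. -/
def den : ∀ x : PSet.{u}, Pos x → PSet.{u}
  | ⟨α, A⟩, none => ⟨α, A⟩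
  | ⟨_, A⟩, some ⟨a, p⟩ => den (A a) p

theorem den_root : ∀ x : PSet.{u}, den x (posRoot x) = x
  | ⟨_, _⟩ => rfl

/-- Extending a position one step down. -/
def extPos : ∀ (x : PSet.{u}) (p : Pos x), (den x p).Type → Pos x
  | ⟨_, _⟩, none, b => some ⟨b, posRoot _⟩
  | ⟨_, A⟩, some ⟨a, p⟩, b => some ⟨a, extPos (A a) p b⟩

theorem den_extPos : ∀ (x : PSet.{u}) (p : Pos x) (b : (den x p).Type),
    den x (extPos x p b) = (den x p).Func b
  | ⟨_, A⟩, none, b => den_root (A b)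
  | ⟨_, A⟩, some ⟨a, p⟩, b => den_extPos (A a) p b

/-- Positions are identified when they denote equivalent pre-sets. -/
def posSetoid (x : PSet.{u}) : Setoid (Pos x) :=
  ⟨fun p q => PSet.Equiv (den x p) (den x q),
   ⟨fun _ => PSet.Equiv.refl _, PSet.Equiv.symm, PSet.Equiv.trans⟩⟩

/-- The carrier of the apg associated to a pre-set. -/
def PosQ (x : PSet.{u}) : Type u := Quotient (posSetoid x)

/-- The relation of the apg associated to a pre-set. -/
def qrel (x : PSet.{u}) : PosQ x → PosQ x → Prop :=
  Quotient.lift₂ (fun p q => den x p ∈ den x q)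
    (fun _p _q _p' _q' hp hq => propext
      ((PSet.Mem.congr_left hp).trans (PSet.Mem.congr_right hq)))

theorem pos_acc : ∀ (x : PSet.{u}) (p : Pos x),
    Relation.ReflTransGen (fun p q : Pos x => den x p ∈ den x q) p (posRoot x)
  | ⟨_, _⟩, none => .refl
  | ⟨α, A⟩, some ⟨a, p⟩ => by
    have h2 : Relation.ReflTransGen (fun p q : Pos (⟨α, A⟩ : PSet) => den _ p ∈ den _ q)
        (some ⟨a, p⟩) (some ⟨a, posRoot (A a)⟩) :=
      Relation.ReflTransGen.lift (fun q => (some ⟨a, q⟩ : Pos ⟨α, A⟩))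
        (fun _ _ h => h) _ _ (pos_acc (A a) p)
    refine h2.tail ?_
    show den (A a) (posRoot (A a)) ∈ (⟨α, A⟩ : PSet)
    rw [den_root]
    exact PSet.Mem.mk A a

theorem den_out (x : PSet.{u}) (p : Pos x) :
    PSet.Equiv (den x ((Quotient.mk (posSetoid x) p).out)) (den x p) := by
  have h : Quotient.mk (posSetoid x) ((Quotient.mk (posSetoid x) p).out) =
      Quotient.mk (posSetoid x) p := Quotient.out_eq _
  exact Quotient.exact h

theorem qrel_out {x : PSet.{u}} {q1 q2 : PosQ x} (h : qrel x q1 q2) :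
    den x q1.out ∈ den x q2.out := by
  rw [← Quotient.out_eq q1, ← Quotient.out_eq q2] at h
  exact h

/-- The apg associated to a pre-set. -/
def ofPSet (x : PSet.{u}) : WEApg.{u} where
  carrier := PosQ x
  rel := qrel x
  root := Quotient.mk (posSetoid x) (posRoot x)
  acc := by
    refine Quotient.ind ?_
    intro p
    exact Relation.ReflTransGen.lift (Quotient.mk (posSetoid x))
      (fun _ _ h => h) _ _ (pos_acc x p)
  wf := by
    refine isWFRel_of_wellFounded
      (Subrelation.wf ?_ (InvImage.wf (fun q : PosQ x => den x q.out) PSet.mem_wf))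
    intro q1 q2 h
    exact qrel_out h
  ext := by
    intro q1 q2
    induction q1 using Quotient.ind with | _ p =>
    induction q2 using Quotient.ind with | _ q =>
    intro h
    apply Quotient.sound
    show PSet.Equiv (den x p) (den x q)
    apply PSet.Mem.ext
    intro w
    constructor
    · intro hw
      obtain ⟨b, hb⟩ := hw
      have hchild : qrel x (Quotient.mk (posSetoid x) (extPos x p b))
          (Quotient.mk (posSetoid x) p) := by
        show den x (extPos x p b) ∈ den x p
        rw [den_extPos]
        exact PSet.func_mem _ b
      have hq := (h _).1 hchild
      have hw' : PSet.Equiv w (den x (extPos x p b)) := by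
        rw [den_extPos]; exact hb
      exact (PSet.Mem.congr_left hw').2 hq
    · intro hw
      obtain ⟨b, hb⟩ := hw
      have hchild : qrel x (Quotient.mk (posSetoid x) (extPos x q b))
          (Quotient.mk (posSetoid x) q) := by
        show den x (extPos x q b) ∈ den x q
        rw [den_extPos]
        exact PSet.func_mem _ b
      have hp := (h _).2 hchild
      have hw' : PSet.Equiv w (den x (extPos x q b)) := by
        rw [den_extPos]; exact hb
      exact (PSet.Mem.congr_left hw').2 hp

theorem ofPSet_equiv (x : PSet.{u}) : PSet.Equiv (ofPSet x).toPSet x := by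
  have h := pset_equiv (ofPSet x).wfr (fun q : PosQ x => den x q.out) ?_ ?_ (ofPSet x).root
  · refine h.trans ?_
    have h1 := den_out x (posRoot x)
    rw [den_root] at h1
    exact h1
  · intro q q' hq
    exact qrel_out hq
  · intro q z hz
    obtain ⟨b, hb⟩ := hz
    refine ⟨Quotient.mk (posSetoid x) (extPos x q.out b), ?_, ?_⟩
    · have hq : qrel x (Quotient.mk (posSetoid x) (extPos x q.out b))
          (Quotient.mk (posSetoid x) q.out) := by
        show den x (extPos x q.out b) ∈ den x q.out
        rw [den_extPos]
        exact PSet.func_mem _ b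
      rwa [Quotient.out_eq q] at hq
    · have h1 := den_out x (extPos x q.out b)
      rw [den_extPos] at h1
      exact hb.trans h1.symm

end WEApgAux

theorem WEApg.toZF_surjective : Function.Surjective WEApg.toZF := by
  intro s
  induction s using Quotient.ind with
  | _ x => exact ⟨WEApgAux.ofPSet x, ZFSet.sound (WEApgAux.ofPSet_equiv x)⟩

theorem isKuratowskiPair_iff_zf (W A B : WEApg.{u}) :
    IsKuratowskiPair W A B ↔ W.toZF = ZFSet.pair A.toZF B.toZF := by
  constructor
  · rintro ⟨P, Q, h1, h2, h3⟩
    have hP : P.toZF = {A.toZF} := by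
      apply ZFSet.ext; intro s
      rw [ZFSet.mem_singleton]
      constructor
      · intro hs
        obtain ⟨Zs, rfl⟩ := WEApg.toZF_surjective s
        exact (Zs.iso_iff_zf A).1 ((h2 Zs).1 ((Zs.mem_iff_zf P).2 hs))
      · rintro rfl
        exact (A.mem_iff_zf P).1 ((h2 A).2 A.iso_refl)
    have hQ : Q.toZF = {A.toZF, B.toZF} := by
      apply ZFSet.ext; intro s
      rw [ZFSet.mem_pair]
      constructor
      · intro hs
        obtain ⟨Zs, rfl⟩ := WEApg.toZF_surjective s
        rcases (h3 Zs).1 ((Zs.mem_iff_zf Q).2 hs) with h | h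
        · exact Or.inl ((Zs.iso_iff_zf A).1 h)
        · exact Or.inr ((Zs.iso_iff_zf B).1 h)
      · rintro (rfl | rfl)
        · exact (A.mem_iff_zf Q).1 ((h3 A).2 (Or.inl A.iso_refl))
        · exact (B.mem_iff_zf Q).1 ((h3 B).2 (Or.inr B.iso_refl))
    apply ZFSet.ext; intro s
    rw [ZFSet.pair, ZFSet.mem_pair, ← hP, ← hQ]
    constructor
    · intro hs
      obtain ⟨Zs, rfl⟩ := WEApg.toZF_surjective s
      rcases (h1 Zs).1 ((Zs.mem_iff_zf W).2 hs) with h | h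
      · exact Or.inl ((Zs.iso_iff_zf P).1 h)
      · exact Or.inr ((Zs.iso_iff_zf Q).1 h)
    · rintro (rfl | rfl)
      · exact (P.mem_iff_zf W).1 ((h1 P).2 (Or.inl P.iso_refl))
      · exact (Q.mem_iff_zf W).1 ((h1 Q).2 (Or.inr Q.iso_refl))
  · intro h
    obtain ⟨P, hP⟩ := WEApg.toZF_surjective ({A.toZF} : ZFSet)
    obtain ⟨Q, hQ⟩ := WEApg.toZF_surjective ({A.toZF, B.toZF} : ZFSet)
    refine ⟨P, Q, fun Z => ?_, fun Z => ?_, fun Z => ?_⟩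
    · rw [Z.mem_iff_zf W, h, Z.iso_iff_zf P, Z.iso_iff_zf Q, hP, hQ,
        ZFSet.pair, ZFSet.mem_pair]
    · rw [Z.mem_iff_zf P, hP, Z.iso_iff_zf A, ZFSet.mem_singleton]
    · rw [Z.mem_iff_zf Q, hQ, Z.iso_iff_zf A, Z.iso_iff_zf B, ZFSet.mem_pair]

/-- Cartesian products (with Kuratowski ordered pairs) exist for well-founded
extensional apgs. -/
theorem weapg_cartesian_product (X Y : WEApg.{u}) :
    ∃ Z : WEApg.{u}, ∀ W : WEApg.{u},
      W.Mem Z ↔ ∃ A B : WEApg.{u}, A.Mem X ∧ B.Mem Y ∧ IsKuratowskiPair W A B := by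
  obtain ⟨Z, hZ⟩ := WEApg.toZF_surjective (ZFSet.prod X.toZF Y.toZF)
  refine ⟨Z, fun W => ?_⟩
  rw [W.mem_iff_zf Z, hZ, ZFSet.mem_prod]
  constructor
  · rintro ⟨a, ha, b, hb, hab⟩
    obtain ⟨A, rfl⟩ := WEApg.toZF_surjective a
    obtain ⟨B, rfl⟩ := WEApg.toZF_surjective b
    exact ⟨A, B, (A.mem_iff_zf X).2 ha, (B.mem_iff_zf Y).2 hb,
      (isKuratowskiPair_iff_zf W A B).2 hab⟩
  · rintro ⟨A, B, hA, hB, hk⟩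
    exact ⟨A.toZF, (A.mem_iff_zf X).1 hA, B.toZF, (B.mem_iff_zf Y).1 hB,
      (isKuratowskiPair_iff_zf W A B).1 hk⟩
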